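/- For every infinite-dimensional Banach lattice E, the set of E-valued pairwise disjoint norm-null sequences with all nonzero terms is completely latticeable in c_0(E): there is a closed infinite-dimensional sublattice of c_0(E), lattice isometric to c_0, all of whose nonzero elements are disjoint norm-null sequences. -/

import Mathlib

open BoundedContinuousFunction Filter

section Aux

variable {E : Type*} [NormedAddCommGroup E] [Lattice E] [HasSolidNorm E] [IsOrderedAddMonoid E]

/-- An element is splittable if it dominates two disjoint positive nonzero elements. -/
def AuxSplittable (e : E) : Prop :=
  ∃ a b : E, 0 < a ∧ 0 < b ∧ a ≤ e ∧ b ≤ e ∧ a ⊓ b = 0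

/-- An atom-like element: positive and not splittable. -/
def AuxAtomLike (e : E) : Prop := 0 < e ∧ ¬ AuxSplittable e

lemma aux_add_inf_le {a b c : E} (ha : 0 ≤ a) (hb : 0 ≤ b) (hc : 0 ≤ c) :
    (a + b) ⊓ c ≤ a ⊓ c + b ⊓ c := by
  set d := (a + b) ⊓ c with hd
  have h1 : d - a ⊓ c = (d - a) ⊔ (d - c) := sub_inf a c d
  have h2 : d - a ≤ b ⊓ c := by
    refine le_inf ?_ ?_
    · have h : d ≤ a + b := inf_le_left
      have := sub_le_sub_right h a
      simpa [add_sub_cancel_left] using this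
    · have h3 : d ≤ c := inf_le_right
      have : d - a ≤ d := by simpa using ha
      exact this.trans h3
  have h4 : d - c ≤ b ⊓ c := (sub_nonpos.2 inf_le_right).trans (le_inf hb hc)
  have h5 : d - a ⊓ c ≤ b ⊓ c := by rw [h1]; exact sup_le h2 h4
  have := add_le_add_right h5 (a ⊓ c)
  simpa [sub_add_cancel, add_comm] using this

lemma aux_sum_inf_le {ι : Type*} (s : Finset ι) (f : ι → E) (c : E)
    (hf : ∀ i ∈ s, 0 ≤ f i) (hc : 0 ≤ c) :
    (∑ i ∈ s, f i) ⊓ c ≤ ∑ i ∈ s, (f i ⊓ c) := by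
  induction s using Finset.cons_induction with
  | empty => simp
  | cons a s ha ih =>
    rw [Finset.sum_cons, Finset.sum_cons]
    have h1 : (f a + ∑ i ∈ s, f i) ⊓ c ≤ f a ⊓ c + (∑ i ∈ s, f i) ⊓ c :=
      aux_add_inf_le (hf a (Finset.mem_cons_self a s))
        (Finset.sum_nonneg fun i hi => hf i (Finset.mem_cons_of_mem hi)) hc
    exact h1.trans (add_le_add_right (ih fun i hi => hf i (Finset.mem_cons_of_mem hi)) _)

lemma aux_sum_le_of_disjoint {ι : Type*} (s : Finset ι) (f : ι → E) (x : E) (hx : 0 ≤ x)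
    (h0 : ∀ i ∈ s, 0 ≤ f i) (hle : ∀ i ∈ s, f i ≤ x)
    (hd : ∀ i ∈ s, ∀ j ∈ s, i ≠ j → f i ⊓ f j = 0) :
    ∑ i ∈ s, f i ≤ x := by
  induction s using Finset.cons_induction with
  | empty => simpa using hx
  | cons a s ha ih =>
    rw [Finset.sum_cons]
    set q := ∑ i ∈ s, f i with hq
    have hfa0 : 0 ≤ f a := h0 a (Finset.mem_cons_self a s)
    have hq0 : 0 ≤ q := Finset.sum_nonneg fun i hi => h0 i (Finset.mem_cons_of_mem hi)
    have hqle : q ≤ x := ih (fun i hi => h0 i (Finset.mem_cons_of_mem hi))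
      (fun i hi => hle i (Finset.mem_cons_of_mem hi))
      (fun i hi j hj hij => hd i (Finset.mem_cons_of_mem hi) j (Finset.mem_cons_of_mem hj) hij)
    have hdisj : f a ⊓ q = 0 := by
      refine le_antisymm ?_ (le_inf hfa0 hq0)
      have h1 : q ⊓ f a ≤ ∑ i ∈ s, (f i ⊓ f a) :=
        aux_sum_inf_le s f (f a) (fun i hi => h0 i (Finset.mem_cons_of_mem hi)) hfa0
      have h2 : ∑ i ∈ s, (f i ⊓ f a) = 0 := by
        apply Finset.sum_eq_zero
        intro i hi
        exact hd i (Finset.mem_cons_of_mem hi) a (Finset.mem_cons_self a s)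
          (by rintro rfl; exact ha hi)
      rw [inf_comm]
      rw [h2] at h1
      exact h1
    have hkey : f a + q = f a ⊔ q := by
      have := inf_add_sup (f a) q
      rw [hdisj, zero_add] at this
      exact this.symm
    rw [hkey]
    exact sup_le (hle a (Finset.mem_cons_self a s)) hqle

lemma aux_supzero_inf (w a : E) : (w ⊔ 0) ⊓ a = (w ⊓ a) ⊔ (0 ⊓ a) := by
  letI := AddCommGroup.toDistribLattice E
  exact inf_sup_right w 0 a

variable [NormedSpace ℝ E] [PosSMulStrictMono ℝ E] [PosSMulReflectLT ℝ E]

lemma aux_smul_inf (c : ℝ) (hc : 0 < c) (x y : E) : (c • x) ⊓ (c • y) = c • (x ⊓ y) :=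
  ((OrderIso.smulRight (β := E) hc).map_inf x y).symm

/-- scalar multiples of disjoint positive elements are disjoint -/
lemma aux_disjoint_smul {x y : E} (hx : 0 ≤ x) (hy : 0 ≤ y) (hxy : x ⊓ y = 0)
    {s t : ℝ} (hs : 0 ≤ s) (ht : 0 ≤ t) : (s • x) ⊓ (t • y) = 0 := by
  set K : ℝ := max s t + 1 with hK
  have hK0 : (0 : ℝ) < K := by positivity
  have h1 : s • x ≤ K • x := smul_le_smul_of_nonneg_right (by simp [hK]; linarith [le_max_left s t]) hx
  have h2 : t • y ≤ K • y := smul_le_smul_of_nonneg_right (by simp [hK]; linarith [le_max_right s t]) hy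
  have h3 : (s • x) ⊓ (t • y) ≤ (K • x) ⊓ (K • y) := inf_le_inf h1 h2
  rw [aux_smul_inf K hK0, hxy, smul_zero] at h3
  exact le_antisymm h3 (le_inf (smul_nonneg hs hx) (smul_nonneg ht hy))

lemma aux_norm_smul_le {t : ℝ} {a x : E} (ht : 0 ≤ t) (ha : 0 ≤ a) (hx : 0 ≤ x)
    (h : t • a ≤ x) : t * ‖a‖ ≤ ‖x‖ := by
  have h1 : |t • a| ≤ |x| := by
    rw [abs_of_nonneg (smul_nonneg ht ha), abs_of_nonneg hx]
    exact h
  have h2 : ‖t • a‖ ≤ ‖x‖ := norm_le_norm_of_abs_le_abs h1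
  rwa [norm_smul, Real.norm_eq_abs, abs_of_nonneg ht] at h2

/-- The order interval `[0, c • a]` below a positive multiple of an atom-like element is
totally ordered. -/
lemma aux_atomlike_total {a : E} (ha : AuxAtomLike a) {c : ℝ} (hc : 0 < c)
    {u v : E} (hu0 : 0 ≤ u) (hu : u ≤ c • a) (hv0 : 0 ≤ v) (hv : v ≤ c • a) :
    u ≤ v ∨ v ≤ u := by
  by_contra hcon
  push_neg at hcon
  obtain ⟨h1, h2⟩ := hcon
  set p : E := (u - v) ⊔ 0 with hp
  set q : E := (v - u) ⊔ 0 with hq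
  have hp0 : 0 ≤ p := le_sup_right
  have hq0 : 0 ≤ q := le_sup_right
  have hpq : p ⊓ q = 0 := by
    have := posPart_inf_negPart_eq_zero (u - v)
    rwa [posPart_def, negPart_def, neg_sub] at this
  have hpu : p ≤ u := sup_le (by simpa using hv0) hu0
  have hqv : q ≤ v := sup_le (by simpa using hu0) hv0
  have hpne : p ≠ 0 := by
    intro h
    apply h1
    have huv : u - v ≤ p := le_sup_left
    rw [h] at huv
    exact sub_nonpos.1 huv
  have hqne : q ≠ 0 := by
    intro h
    apply h2
    have hvu : v - u ≤ q := le_sup_left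
    rw [h] at hvu
    exact sub_nonpos.1 hvu
  apply ha.2
  refine ⟨c⁻¹ • p, c⁻¹ • q, ?_, ?_, ?_, ?_, ?_⟩
  · exact smul_pos (by positivity) (lt_of_le_of_ne hp0 (Ne.symm hpne))
  · exact smul_pos (by positivity) (lt_of_le_of_ne hq0 (Ne.symm hqne))
  · have := smul_le_smul_of_nonneg_left (hpu.trans hu) (le_of_lt (inv_pos.2 hc))
    rwa [inv_smul_smul₀ hc.ne'] at this
  · have := smul_le_smul_of_nonneg_left (hqv.trans hv) (le_of_lt (inv_pos.2 hc))
    rwa [inv_smul_smul₀ hc.ne'] at this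
  · rw [aux_smul_inf c⁻¹ (inv_pos.2 hc), hpq, smul_zero]

/-- Every element of `[0, c • a]` is a multiple of the atom-like element `a`. -/
lemma aux_atomlike_multiple {a : E} (ha : AuxAtomLike a) {c : ℝ} (hc : 0 < c)
    {y : E} (hy0 : 0 ≤ y) (hy : y ≤ c • a) :
    ∃ t : ℝ, 0 ≤ t ∧ t ≤ c ∧ y = t • a := by
  set A : Set ℝ := {s : ℝ | s ∈ Set.Icc 0 c ∧ s • a ≤ y} with hA
  have hA0 : (0 : ℝ) ∈ A := ⟨⟨le_refl 0, hc.le⟩, by simpa using hy0⟩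
  have hAne : A.Nonempty := ⟨0, hA0⟩
  have hAbdd : BddAbove A := ⟨c, fun s hs => hs.1.2⟩
  set t := sSup A with hT
  have ht0 : 0 ≤ t := le_csSup hAbdd hA0
  have htc : t ≤ c := csSup_le hAne fun s hs => hs.1.2
  have hclosed : IsClosed {z : E | 0 ≤ z} := isClosed_nonneg
  -- t • a ≤ y
  have hta : t • a ≤ y := by
    obtain ⟨u, hmono, hlim, hmem⟩ := exists_seq_tendsto_sSup hAne hAbdd
    have hlim2 : Tendsto (fun n => y - u n • a) atTop (nhds (y - t • a)) := by
      exact (tendsto_const_nhds.sub ((hlim.smul_const a)))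
    have hmemK : ∀ n, y - u n • a ∈ {z : E | 0 ≤ z} := fun n => by
      simpa using (hmem n).2
    have := hclosed.mem_of_tendsto hlim2 (Filter.Eventually.of_forall hmemK)
    simpa [sub_nonneg] using this
  -- y ≤ t • a
  have hyt : y ≤ t • a := by
    have hstep : ∀ s : ℝ, t < s → s ≤ c → y ≤ s • a := by
      intro s hts hsc
      have hs0 : 0 ≤ s := ht0.trans hts.le
      have hns : s ∉ A := fun hmem => absurd (le_csSup hAbdd hmem) (not_le.2 hts)
      have hnle : ¬ (s • a ≤ y) := fun hle => hns ⟨⟨hs0, hsc⟩, hle⟩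
      have htot := aux_atomlike_total ha hc hy0 hy (smul_nonneg hs0 ha.1.le)
        (smul_le_smul_of_nonneg_right hsc ha.1.le)
      tauto
    rcases eq_or_lt_of_le htc with h | h
    · rw [h]; exact hy.trans (le_of_eq rfl)
    · -- t < c : approximate from above
      have hlim : Tendsto (fun n : ℕ => t + (c - t) / (n + 1)) atTop (nhds t) := by
        have h1 : Tendsto (fun n : ℕ => (c - t) / (n + 1)) atTop (nhds 0) := by
          have := tendsto_one_div_add_atTop_nhds_zero_nat (𝕜 := ℝ)
          have h2 := this.const_mul (c - t)
          simpa [div_eq_mul_inv, mul_comm, mul_one_div] using h2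
        have h3 := (tendsto_const_nhds : Tendsto (fun _ : ℕ => t) atTop (nhds t)).add h1
        simpa using h3
      have hmem : ∀ n : ℕ, y ≤ (t + (c - t) / (n + 1)) • a := by
        intro n
        have hpos : 0 < (c - t) / ((n : ℝ) + 1) := div_pos (by linarith) (by positivity)
        have hle : t + (c - t) / (n + 1) ≤ c := by
          have h1 : (c - t) / ((n : ℝ) + 1) ≤ (c - t) / 1 := by
            apply div_le_div_of_nonneg_left (by linarith) one_pos
            simp
          simp at h1
          linarith
        exact hstep _ (by linarith) hle
      have hlim2 : Tendsto (fun n : ℕ => (t + (c - t) / (n + 1)) • a - y) atTop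
          (nhds (t • a - y)) := by
        exact ((hlim.smul_const a).sub tendsto_const_nhds)
      have := hclosed.mem_of_tendsto hlim2
        (Filter.Eventually.of_forall fun n => by simpa [sub_nonneg] using hmem n)
      simpa [sub_nonneg] using this
  exact ⟨t, ht0, htc, le_antisymm hyt hta⟩

/-- The component of `x` along an atom-like element. -/
lemma aux_atomlike_component {a : E} (ha : AuxAtomLike a) {x : E} (hx : 0 ≤ x) :
    ∃ τ : ℝ, 0 ≤ τ ∧ τ • a ≤ x ∧ (x - τ • a) ⊓ a ≤ 0 := by
  have hane : a ≠ 0 := ha.1.ne'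
  have hna : 0 < ‖a‖ := norm_pos_iff.2 hane
  set c : ℝ := ‖x‖ / ‖a‖ + 2 with hc
  have hc0 : 0 < c := by positivity
  set z := x ⊓ (c • a) with hz
  have hz0 : 0 ≤ z := le_inf hx (smul_nonneg hc0.le ha.1.le)
  have hzc : z ≤ c • a := inf_le_right
  obtain ⟨t, ht0, htc, hzt⟩ := aux_atomlike_multiple ha hc0 hz0 hzc
  have htx : t • a ≤ x := hzt ▸ inf_le_left
  have htb : t ≤ ‖x‖ / ‖a‖ := by
    have := aux_norm_smul_le ht0 ha.1.le hx htx
    rw [le_div_iff₀ hna]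
    linarith [this]
  have hct : 1 ≤ c - t := by simp [hc]; linarith
  refine ⟨t, ht0, htx, ?_⟩
  have h1 : a ≤ (c - t) • a := by
    have := smul_le_smul_of_nonneg_right hct ha.1.le
    simpa using this
  have h2 : (x - t • a) ⊓ a ≤ (x - t • a) ⊓ ((c - t) • a) := inf_le_inf_left _ h1
  have h3 : (x - t • a) ⊓ ((c - t) • a) = (x ⊓ (c • a)) - t • a := by
    rw [inf_sub x (c • a) (t • a), sub_smul]
  rw [h3, ← hz, hzt, sub_self] at h2
  exact h2

end Aux

section DisjointSeq

variable {E : Type*} [NormedAddCommGroup E] [Lattice E] [HasSolidNorm E] [IsOrderedAddMonoid E]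
    [NormedSpace ℝ E] [PosSMulStrictMono ℝ E] [PosSMulReflectLT ℝ E]

/-- If there is no infinite positive pairwise disjoint sequence, then every positive element
dominates an atom-like element. -/
lemma aux_exists_atomlike
    (hno : ¬ ∃ x : ℕ → E, (∀ j, 0 ≤ x j) ∧ (∀ j, x j ≠ 0) ∧ ∀ i j, i ≠ j → x i ⊓ x j = 0)
    {e : E} (he : 0 < e) : ∃ a : E, AuxAtomLike a ∧ a ≤ e := by
  by_contra hcon
  push_neg at hcon
  have hsplit : ∀ x : E, 0 < x → x ≤ e → AuxSplittable x := by
    intro x hx hxe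
    by_contra hns
    exact absurd hxe (hcon x ⟨hx, hns⟩)
  -- choice function for splitting
  have hch : ∀ x : {y : E // 0 < y ∧ y ≤ e}, ∃ p : E × E,
      0 < p.1 ∧ 0 < p.2 ∧ p.1 ≤ x.val ∧ p.2 ≤ x.val ∧ p.1 ⊓ p.2 = 0 := by
    rintro ⟨x, hx1, hx2⟩
    obtain ⟨a, b, ha, hb, hae, hbe, hab⟩ := hsplit x hx1 hx2
    exact ⟨(a, b), ha, hb, hae, hbe, hab⟩
  choose F h1 h2 h3 h4 h5 using hch
  -- iterate
  let g : ℕ → {y : E // 0 < y ∧ y ≤ e} := fun n =>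
    Nat.rec ⟨e, he, le_refl e⟩ (fun _ xn => ⟨(F xn).2, h2 xn, (h4 xn).trans xn.2.2⟩) n
  have hgsucc : ∀ n, (g (n + 1)).val = (F (g n)).2 := fun n => rfl
  have hmono : ∀ i j, i < j → (g j).val ≤ (F (g i)).2 := by
    intro i j hij
    induction j with
    | zero => omega
    | succ j ih =>
      rcases Nat.lt_succ_iff_lt_or_eq.1 hij with h | h
      · exact ((h4 (g j)).trans (ih h))
      · subst h; exact le_of_eq (hgsucc i)
  apply hno
  refine ⟨fun n => (F (g n)).1, fun n => (h1 (g n)).le, fun n => (h1 (g n)).ne', ?_⟩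
  have key : ∀ i j, i < j → (F (g i)).1 ⊓ (F (g j)).1 = 0 := by
    intro i j hij
    have hj : (F (g j)).1 ≤ (F (g i)).2 := (h3 (g j)).trans (hmono i j hij)
    have : (F (g i)).1 ⊓ (F (g j)).1 ≤ (F (g i)).1 ⊓ (F (g i)).2 :=
      inf_le_inf_left _ hj
    rw [h5 (g i)] at this
    exact le_antisymm this (le_inf (h1 (g i)).le (h1 (g j)).le)
  intro i j hij
  rcases lt_or_gt_of_ne hij with h | h
  · exact key i j h
  · rw [inf_comm]; exact key j i h

/-- An infinite-dimensional normed lattice contains an infinite positive pairwise disjoint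
sequence of nonzero elements. -/
lemma aux_exists_disjoint_seq (h : ¬ FiniteDimensional ℝ E) :
    ∃ x : ℕ → E, (∀ j, 0 ≤ x j) ∧ (∀ j, x j ≠ 0) ∧ ∀ i j, i ≠ j → x i ⊓ x j = 0 := by
  by_contra hno
  -- Zorn's lemma: maximal pairwise disjoint family of atom-like elements
  set 𝒜 : Set (Set E) := {S | (∀ a ∈ S, AuxAtomLike a) ∧ S.Pairwise fun a b => a ⊓ b = 0}
    with h𝒜
  obtain ⟨M, hM⟩ := zorn_subset 𝒜 (by
    intro c hc hchain
    refine ⟨⋃₀ c, ⟨?_, ?_⟩, fun s hs => Set.subset_sUnion_of_mem hs⟩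
    · rintro a ⟨s, hs, has⟩
      exact (hc hs).1 a has
    · rintro a ⟨s, hs, has⟩ b ⟨t, ht, hbt⟩ hab
      rcases hchain.total hs ht with hst | hts
      · exact (hc ht).2 (hst has) hbt hab
      · exact (hc hs).2 has (hts hbt) hab)
  have hMatom : ∀ a ∈ M, AuxAtomLike a := hM.prop.1
  have hMpair : M.Pairwise fun a b => a ⊓ b = 0 := hM.prop.2
  -- M is finite
  have hMfin : M.Finite := by
    by_contra hinf
    apply hno
    set f := Set.Infinite.natEmbedding M hinf
    refine ⟨fun n => (f n : E), fun n => (hMatom _ (f n).2).1.le,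
      fun n => (hMatom _ (f n).2).1.ne', ?_⟩
    intro i j hij
    exact hMpair (f i).2 (f j).2 (fun hv => hij (f.injective (Subtype.ext hv)))
  -- M is a maximal disjoint family
  have hMmax : ∀ x : E, 0 < x → ∃ a ∈ M, ¬ (x ⊓ a = 0) := by
    intro x hx
    by_contra hcon
    push_neg at hcon
    obtain ⟨y, hy, hyx⟩ := aux_exists_atomlike hno hx
    have hyM : y ∉ M := by
      intro hyM
      have := hcon y hyM
      have h2 : y ≤ x ⊓ y := le_inf hyx (le_refl y)
      rw [this] at h2
      exact absurd (le_antisymm h2 hy.1.le) hy.1.ne'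
    have hins : insert y M ∈ 𝒜 := by
      constructor
      · rintro a (rfl | ha)
        · exact hy
        · exact hMatom a ha
      · intro a ha b hb hab
        have hkey : ∀ c ∈ M, y ⊓ c = 0 := by
          intro c hc
          have h1 : y ⊓ c ≤ x ⊓ c := inf_le_inf_right c hyx
          rw [hcon c hc] at h1
          exact le_antisymm h1 (le_inf hy.1.le ((hMatom c hc).1.le))
        rcases ha with rfl | ha
        · rcases hb with rfl | hb
          · exact absurd rfl hab
          · exact hkey b hb
        · rcases hb with rfl | hb
          · rw [inf_comm]; exact hkey a ha
          · exact hMpair ha hb hab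
    have heq := hM.eq_of_subset hins (Set.subset_insert y M)
    exact hyM (heq ▸ Set.mem_insert y M)
  -- Every element of E is in the span of M, hence E is finite dimensional
  have hstep : ∀ x : E, 0 ≤ x → x ∈ Submodule.span ℝ M := by
    intro x hx
    have hker : ∀ a : E, AuxAtomLike a → ∃ τ : ℝ, 0 ≤ τ ∧ τ • a ≤ x ∧ (x - τ • a) ⊓ a ≤ 0 :=
      fun a ha => aux_atomlike_component ha hx
    classical
    set τ : E → ℝ := fun a => if h : AuxAtomLike a then (hker a h).choose else 0 with hτ
    have hτ0 : ∀ a ∈ M, 0 ≤ τ a := by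
      intro a ha
      simp only [hτ, dif_pos (hMatom a ha)]
      exact (hker a (hMatom a ha)).choose_spec.1
    have hτle : ∀ a ∈ M, τ a • a ≤ x := by
      intro a ha
      simp only [hτ, dif_pos (hMatom a ha)]
      exact (hker a (hMatom a ha)).choose_spec.2.1
    have hτinf : ∀ a ∈ M, (x - τ a • a) ⊓ a ≤ 0 := by
      intro a ha
      simp only [hτ, dif_pos (hMatom a ha)]
      exact (hker a (hMatom a ha)).choose_spec.2.2
    set Mf := hMfin.toFinset with hMf
    have hmem : ∀ a, a ∈ Mf ↔ a ∈ M := fun a => hMfin.mem_toFinset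
    set y := ∑ a ∈ Mf, τ a • a with hy
    -- y ≤ x
    have hyx : y ≤ x := by
      apply aux_sum_le_of_disjoint Mf (fun a => τ a • a) x hx
      · intro a ha
        exact smul_nonneg (hτ0 a ((hmem a).1 ha)) (hMatom a ((hmem a).1 ha)).1.le
      · intro a ha; exact hτle a ((hmem a).1 ha)
      · intro a ha b hb hab
        exact aux_disjoint_smul (hMatom a ((hmem a).1 ha)).1.le (hMatom b ((hmem b).1 hb)).1.le
          (hMpair ((hmem a).1 ha) ((hmem b).1 hb) hab)
          (hτ0 a ((hmem a).1 ha)) (hτ0 b ((hmem b).1 hb))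
    -- x ≤ y
    have hxy : x ≤ y := by
      set w := x - y with hw
      have hwa : ∀ a ∈ M, (w ⊔ 0) ⊓ a = 0 := by
        intro a ha
        have hya : τ a • a ≤ y := by
          apply Finset.single_le_sum (f := fun a => τ a • a) ?_ ((hmem a).2 ha)
          intro b hb
          exact smul_nonneg (hτ0 b ((hmem b).1 hb)) (hMatom b ((hmem b).1 hb)).1.le
        have hw1 : w ≤ x - τ a • a := by
          rw [hw]
          exact sub_le_sub_left hya x
        have h2 : (w ⊔ 0) ⊓ a = (w ⊓ a) ⊔ (0 ⊓ a) := aux_supzero_inf w a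
        have h3 : w ⊓ a ≤ (x - τ a • a) ⊓ a := inf_le_inf_right a hw1
        have h4 : (w ⊔ 0) ⊓ a ≤ 0 := by
          rw [h2]
          exact sup_le (h3.trans (hτinf a ha)) inf_le_left
        exact le_antisymm h4 (le_inf le_sup_right ((hMatom a ha).1.le))
      have hwzero : w ⊔ 0 = 0 := by
        by_contra hne
        have hpos : 0 < w ⊔ 0 := lt_of_le_of_ne le_sup_right (Ne.symm hne)
        obtain ⟨a, ha, hcontra⟩ := hMmax (w ⊔ 0) hpos
        exact hcontra (hwa a ha)
      have : w ≤ 0 := by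
        have := le_sup_left (a := w) (b := (0 : E))
        rwa [hwzero] at this
      rw [hw] at this
      exact sub_nonpos.1 this
    have hxeq : x = y := le_antisymm hxy hyx
    rw [hxeq, hy]
    apply Submodule.sum_mem
    intro a ha
    exact Submodule.smul_mem _ _ (Submodule.subset_span ((hmem a).1 ha))
  have hspan : Submodule.span ℝ M = ⊤ := by
    rw [Submodule.eq_top_iff']
    intro x
    have hdecomp : x = (x ⊔ 0) - ((-x) ⊔ 0) := by
      have := posPart_sub_negPart x
      rw [posPart_def, negPart_def] at this
      exact this.symm
    rw [hdecomp]
    exact Submodule.sub_mem _ (hstep _ le_sup_right) (hstep _ le_sup_right)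
  apply h
  have hfd : FiniteDimensional ℝ (Submodule.span ℝ M) := FiniteDimensional.span_of_finite ℝ hMfin
  rw [hspan] at hfd
  exact (Submodule.topEquiv (R := ℝ) (M := E)).finiteDimensional

end DisjointSeq

/-- For every infinite-dimensional Banach lattice `E`, the set of `E`-valued pairwise
disjoint norm-null sequences is completely latticeable in `c₀(E)`: there is a closed
infinite-dimensional sublattice of `c₀(E)` (realized inside `ℓ∞(E) = ℕ →ᵇ E`),
lattice isometric to `c₀` — namely the image of the `c₀`-part of `ℕ →ᵇ ℝ` under a
linear isometric Riesz homomorphism `T` — all of whose nonzero elements are pairwise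
disjoint norm-null sequences. -/
theorem disjoint_normNull_completely_latticeable_c0
    {E : Type*} [NormedAddCommGroup E] [Lattice E] [HasSolidNorm E] [IsOrderedAddMonoid E]
    [NormedSpace ℝ E] [PosSMulStrictMono ℝ E] [PosSMulReflectLT ℝ E]
    [CompleteSpace E] (h : ¬ FiniteDimensional ℝ E) :
    ∃ T : (ℕ →ᵇ ℝ) →L[ℝ] (ℕ →ᵇ E),
      (∀ a, ‖T a‖ = ‖a‖) ∧
      (∀ a b : ℕ →ᵇ ℝ, T (a ⊓ b) = T a ⊓ T b) ∧
      (∀ a : ℕ →ᵇ ℝ, Tendsto (⇑a) atTop (nhds (0 : ℝ)) →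
        Tendsto (fun j => T a j) atTop (nhds (0 : E))) ∧
      IsClosed (T '' {a : ℕ →ᵇ ℝ | Tendsto (⇑a) atTop (nhds (0 : ℝ))}) ∧
      (∀ a : ℕ →ᵇ ℝ, Tendsto (⇑a) atTop (nhds (0 : ℝ)) → a ≠ 0 →
        (∀ i j, i ≠ j → |T a i| ⊓ |T a j| = 0) ∧
        Tendsto (fun j => T a j) atTop (nhds (0 : E))) := by
  obtain ⟨x, hx0, hxne, hxd⟩ := aux_exists_disjoint_seq h
  -- normalize
  set e : ℕ → E := fun j => ‖x j‖⁻¹ • x j with he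
  have hnx : ∀ j, (0 : ℝ) < ‖x j‖ := fun j => norm_pos_iff.2 (hxne j)
  have he0 : ∀ j, 0 ≤ e j := fun j => smul_nonneg (by positivity) (hx0 j)
  have he1 : ∀ j, ‖e j‖ = 1 := fun j => by
    rw [he, norm_smul, Real.norm_eq_abs, abs_of_nonneg (by positivity)]
    exact inv_mul_cancel₀ (hnx j).ne'
  have hed : ∀ i j, i ≠ j → e i ⊓ e j = 0 := fun i j hij =>
    aux_disjoint_smul (hx0 i) (hx0 j) (hxd i j hij) (by positivity) (by positivity)
  -- the map
  have hbound : ∀ (a : ℕ →ᵇ ℝ) (j : ℕ), ‖a j • e j‖ ≤ ‖a‖ := by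
    intro a j
    rw [norm_smul, he1 j, mul_one]
    exact norm_coe_le_norm a j
  set Tf : (ℕ →ᵇ ℝ) → (ℕ →ᵇ E) := fun a =>
    ofNormedAddCommGroupDiscrete (fun j => a j • e j) ‖a‖ (hbound a) with hTf
  have hTfapp : ∀ (a : ℕ →ᵇ ℝ) (j : ℕ), Tf a j = a j • e j := fun a j => rfl
  set L : (ℕ →ᵇ ℝ) →ₗ[ℝ] (ℕ →ᵇ E) :=
    { toFun := Tf
      map_add' := by
        intro a b
        ext j
        simp [hTfapp, add_smul]
      map_smul' := by
        intro c a
        ext j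
        simp [hTfapp, mul_smul] } with hL
  have hLapp : ∀ (a : ℕ →ᵇ ℝ) (j : ℕ), L a j = a j • e j := fun a j => rfl
  set T : (ℕ →ᵇ ℝ) →L[ℝ] (ℕ →ᵇ E) := L.mkContinuous 1 (by
    intro a
    rw [one_mul]
    exact (norm_le (norm_nonneg a)).2 fun j => hbound a j) with hT
  have hTapp : ∀ (a : ℕ →ᵇ ℝ) (j : ℕ), T a j = a j • e j := fun a j => rfl
  -- isometry
  have hnorm : ∀ a : ℕ →ᵇ ℝ, ‖T a‖ = ‖a‖ := by
    intro a
    apply le_antisymm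
    · apply (norm_le (norm_nonneg a)).2
      intro j
      rw [hTapp]
      exact hbound a j
    · apply (norm_le (norm_nonneg (T a))).2
      intro j
      have : ‖a j‖ = ‖T a j‖ := by
        rw [hTapp, norm_smul, he1 j, mul_one]
      rw [this]
      exact norm_coe_le_norm (T a) j
  refine ⟨T, hnorm, ?_, ?_, ?_, ?_⟩
  · -- lattice homomorphism
    intro a b
    have key : ∀ j, (a j ⊓ b j) • e j = (a j • e j) ⊓ (b j • e j) := by
      intro j
      rcases le_total (a j) (b j) with hab | hab
      · rw [inf_eq_left.2 hab, (inf_eq_left.2 (smul_le_smul_of_nonneg_right hab (he0 j)))]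
      · rw [inf_eq_right.2 hab, (inf_eq_right.2 (smul_le_smul_of_nonneg_right hab (he0 j)))]
    ext j
    exact key j
  · -- null sequences map to null sequences
    intro a ha
    apply squeeze_zero_norm (a := fun j => ‖a j‖)
    · intro j
      rw [hTapp, norm_smul, he1 j, mul_one]
    · simpa using ha.norm
  · -- closed image
    have hisom : Isometry (T : (ℕ →ᵇ ℝ) → (ℕ →ᵇ E)) :=
      AddMonoidHomClass.isometry_of_norm T hnorm
    have hSclosed : IsClosed {a : ℕ →ᵇ ℝ | Tendsto (⇑a) atTop (nhds (0 : ℝ))} := by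
      apply isClosed_of_closure_subset
      intro a ha
      rw [Set.mem_setOf_eq, Metric.tendsto_atTop]
      intro ε hε
      obtain ⟨b, hbS, hab⟩ := Metric.mem_closure_iff.1 ha (ε / 2) (by positivity)
      obtain ⟨N, hN⟩ := (Metric.tendsto_atTop.1 hbS) (ε / 2) (by positivity)
      refine ⟨N, fun n hn => ?_⟩
      have h1 : dist (a n) (b n) ≤ dist a b := dist_coe_le_dist n
      calc dist (a n) 0 ≤ dist (a n) (b n) + dist (b n) 0 := dist_triangle _ _ _
        _ < ε / 2 + ε / 2 := add_lt_add (h1.trans_lt hab) (hN n hn)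
        _ = ε := by ring
    have hScomplete : IsComplete {a : ℕ →ᵇ ℝ | Tendsto (⇑a) atTop (nhds (0 : ℝ))} :=
      hSclosed.isComplete
    have : IsComplete ((T : (ℕ →ᵇ ℝ) → (ℕ →ᵇ E)) ''
        {a : ℕ →ᵇ ℝ | Tendsto (⇑a) atTop (nhds (0 : ℝ))}) :=
      (isComplete_image_iff hisom.isUniformInducing).2 hScomplete
    exact this.isClosed
  · -- disjointness and nullity of nonzero elements
    intro a ha _
    constructor
    · intro i j hij
      have habs : ∀ k, |T a k| = |a k| • e k := by
        intro k
        rw [hTapp]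
        rcases le_total 0 (a k) with hk | hk
        · rw [abs_of_nonneg (smul_nonneg hk (he0 k)), abs_of_nonneg hk]
        · rw [abs_of_nonpos (smul_nonpos_of_nonpos_of_nonneg hk (he0 k)),
            abs_of_nonpos hk, neg_smul]
      rw [habs i, habs j]
      exact aux_disjoint_smul (he0 i) (he0 j) (hed i j hij) (abs_nonneg _) (abs_nonneg _)
    · apply squeeze_zero_norm (a := fun j => ‖a j‖)
      · intro j
        rw [hTapp, norm_smul, he1 j, mul_one]
      · simpa using ha.norm
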